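/- Let N_1,...,N_d be n×n Hermitian matrices with N_1 + ... + N_d = I_n. Then {a ∈ ℝ^d : a_1N_1+...+a_dN_d ⪰ 0} equals the nonnegative orthant ℝ_{≥0}^d if and only if there exists a unitary U ∈ Mat_n(ℂ) such that for every i, U*N_iU is block diagonal of the form diag(E_ii, Ñ_i) with E_ii the d×d standard matrix unit and Ñ_i positive semidefinite. -/

import Mathlib

open ComplexOrder Matrix BigOperators

set_option linter.unusedSectionVars false
set_option maxHeartbeats 1000000

namespace Stmt1Aux

variable {p q : Type*} [Fintype p] [Fintype q] [DecidableEq p] [DecidableEq q]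

lemma psd_fromBlocks {A : Matrix p p ℂ} {D : Matrix q q ℂ}
    (hA : A.PosSemidef) (hD : D.PosSemidef) :
    (Matrix.fromBlocks A 0 0 D).PosSemidef := by
  refine Matrix.PosSemidef.of_dotProduct_mulVec_nonneg ?_ ?_
  · rw [isHermitian_fromBlocks_iff]
    exact ⟨hA.1, by simp, by simp, hD.1⟩
  · intro x
    rw [← Sum.elim_comp_inl_inr x, Function.star_sumElim, fromBlocks_mulVec]
    simp only [zero_mulVec, add_zero, zero_add, sumElim_dotProduct_sumElim]
    exact add_nonneg (hA.dotProduct_mulVec_nonneg _) (hD.dotProduct_mulVec_nonneg _)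

lemma psd_real_smul {A : Matrix p p ℂ} (hA : A.PosSemidef) {c : ℝ} (hc : 0 ≤ c) :
    ((c:ℂ) • A).PosSemidef := by
  refine Matrix.PosSemidef.of_dotProduct_mulVec_nonneg ?_ ?_
  · unfold Matrix.IsHermitian
    rw [Matrix.conjTranspose_smul, Complex.star_def, Complex.conj_ofReal, hA.1.eq]
  · intro x
    rw [smul_mulVec, dotProduct_smul, smul_eq_mul]
    exact mul_nonneg (by exact_mod_cast hc) (hA.dotProduct_mulVec_nonneg x)

lemma psd_sub_smul_one {M : Matrix p p ℂ} (hM : M.IsHermitian) {μ : ℝ}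
    (h : ∀ k, μ ≤ hM.eigenvalues k) : (M - (μ:ℂ) • 1).PosSemidef := by
  have hU : (hM.eigenvectorUnitary : Matrix p p ℂ) * star (hM.eigenvectorUnitary : Matrix p p ℂ) = 1 :=
    Matrix.mem_unitaryGroup_iff.mp hM.eigenvectorUnitary.2
  have key : M - (μ:ℂ) • 1 =
      (hM.eigenvectorUnitary : Matrix p p ℂ) *
        Matrix.diagonal (fun k => ((hM.eigenvalues k - μ : ℝ) : ℂ)) *
        star (hM.eigenvectorUnitary : Matrix p p ℂ) := by
    have hdiag : Matrix.diagonal (fun k => ((hM.eigenvalues k - μ : ℝ) : ℂ)) =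
        Matrix.diagonal (RCLike.ofReal ∘ hM.eigenvalues) - (μ:ℂ) • 1 := by
      ext j k
      by_cases hjk : j = k
      · subst hjk
        simp [Matrix.one_apply, Complex.ofReal_sub]
      · simp [Matrix.diagonal_apply_ne _ hjk, Matrix.one_apply_ne hjk]
    have hs := hM.spectral_theorem
    rw [Unitary.conjStarAlgAut_apply] at hs
    rw [hdiag, Matrix.mul_sub, Matrix.sub_mul, ← hs]
    congr 1
    rw [Matrix.mul_smul, Matrix.smul_mul, Matrix.mul_one, hU]
  rw [key]
  have hdpsd : (Matrix.diagonal (fun k => ((hM.eigenvalues k - μ : ℝ) : ℂ))).PosSemidef :=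
    Matrix.posSemidef_diagonal_iff.mpr fun k => by
      rw [Complex.zero_le_real]; linarith [h k]
  simpa [Matrix.star_eq_conjTranspose] using hdpsd.mul_mul_conjTranspose_same (hM.eigenvectorUnitary : Matrix p p ℂ)

lemma exists_unit_eigvec [Nonempty p] {A : Matrix p p ℂ}
    (hA : (1 - A).PosSemidef)
    (hcon : ∀ μ : ℝ, 0 < μ → ¬ (1 + ((-μ:ℂ) - 1) • A).PosSemidef) :
    ∃ v : p → ℂ, A *ᵥ v = v ∧ star v ⬝ᵥ v = 1 := by
  set M : Matrix p p ℂ := 1 - A with hMdef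
  have hMh : M.IsHermitian := hA.1
  by_cases hz : ∃ k, hMh.eigenvalues k = 0
  · obtain ⟨k, hk⟩ := hz
    refine ⟨⇑(hMh.eigenvectorBasis k), ?_, ?_⟩
    · have h1 := hMh.mulVec_eigenvectorBasis k
      rw [hk, zero_smul] at h1
      have h2 : (1 - A) *ᵥ ⇑(hMh.eigenvectorBasis k) = 0 := by rw [← hMdef, h1]
      rw [Matrix.sub_mulVec, Matrix.one_mulVec, sub_eq_zero] at h2
      exact h2.symm
    · have := orthonormal_iff_ite.mp hMh.eigenvectorBasis.orthonormal k k
      rw [if_pos rfl] at this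
      rw [← this]
      rw [EuclideanSpace.inner_eq_star_dotProduct, dotProduct_comm]
  · push_neg at hz
    set μ : ℝ := Finset.univ.inf' Finset.univ_nonempty hMh.eigenvalues with hμdef
    have hμpos : 0 < μ := by
      rw [hμdef, Finset.lt_inf'_iff]
      intro k _
      rcases lt_or_eq_of_le (hA.eigenvalues_nonneg k) with h | h
      · exact h
      · exact absurd h.symm (hz k)
    exfalso
    refine hcon μ hμpos ?_
    have hps : (M - (μ:ℂ) • 1).PosSemidef :=
      psd_sub_smul_one hMh fun k => Finset.inf'_le _ (Finset.mem_univ k)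
    have hid : 1 + ((-μ:ℂ) - 1) • A = ((1+μ:ℝ):ℂ) • (M - (μ:ℂ) • 1) + ((μ^2:ℝ):ℂ) • 1 := by
      rw [hMdef]; push_cast; module
    rw [hid]
    exact (psd_real_smul hps (by linarith)).add (psd_real_smul Matrix.PosSemidef.one (sq_nonneg μ))

lemma single_quad (B : Matrix p p ℂ) (k : p) :
    star (Pi.single k 1 : p → ℂ) ⬝ᵥ (B *ᵥ (Pi.single k 1 : p → ℂ)) = B k k := by
  rw [Matrix.mulVec_single]
  simp [dotProduct, Pi.single_apply, apply_ite, Finset.sum_ite_eq']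

lemma inner_eq_dot (x y : EuclideanSpace ℂ p) : (inner ℂ x y : ℂ) = star (⇑x) ⬝ᵥ (⇑y) := by
  simp [PiLp.inner_apply, dotProduct, RCLike.star_def, mul_comm]

lemma sum_quad {ι : Type*} [Fintype ι] (x : p → ℂ) (f : ι → Matrix p p ℂ) :
    ∑ l, star x ⬝ᵥ (f l *ᵥ x) = star x ⬝ᵥ ((∑ l, f l) *ᵥ x) := by
  simp only [dotProduct, Matrix.mulVec, Matrix.sum_apply, Finset.sum_mul, Finset.mul_sum]
  rw [Finset.sum_comm]
  refine Finset.sum_congr rfl fun a _ => ?_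
  rw [Finset.sum_comm]

lemma psd_sum {ι : Type*} (s : Finset ι) (f : ι → Matrix p p ℂ)
    (h : ∀ i ∈ s, (f i).PosSemidef) : (∑ i ∈ s, f i).PosSemidef :=
  Finset.sum_induction f _ (fun _ _ ha hb => ha.add hb) Matrix.PosSemidef.zero h

end Stmt1Aux

theorem stmt1 (d m : ℕ) (N : Fin d → Matrix (Fin d ⊕ Fin m) (Fin d ⊕ Fin m) ℂ)
    (hHerm : ∀ i, (N i).IsHermitian) (hSum : ∑ i, N i = 1) :
    ({a : Fin d → ℝ | (∑ i, (a i : ℂ) • N i).PosSemidef} = {a : Fin d → ℝ | ∀ i, 0 ≤ a i})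
      ↔ ∃ U ∈ Matrix.unitaryGroup (Fin d ⊕ Fin m) ℂ,
          ∃ Nt : Fin d → Matrix (Fin m) (Fin m) ℂ,
            (∀ i, (Nt i).PosSemidef) ∧
            ∀ i, star U * N i * U =
              Matrix.fromBlocks (Matrix.single i i 1) 0 0 (Nt i) := by
  classical
  constructor
  · intro h
    have hmem : ∀ a : Fin d → ℝ, (∑ i, (a i : ℂ) • N i).PosSemidef ↔ ∀ i, 0 ≤ a i :=
      fun a => Set.ext_iff.mp h a
    have hpsd : ∀ i, (N i).PosSemidef := by
      intro i
      have h1 : ∑ j, (((Pi.single i 1 : Fin d → ℝ) j : ℂ)) • N j = N i := by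
        rw [Finset.sum_eq_single i]
        · simp
        · intro b _ hb; simp [Pi.single_eq_of_ne hb]
        · simp
      have h2 := (hmem (Pi.single i 1)).mpr (fun j => by
        by_cases hj : j = i
        · subst hj; simp
        · simp [Pi.single_eq_of_ne hj])
      rwa [h1] at h2
    have hkey : ∀ (i : Fin d) (c : ℝ),
        ∑ j, (((if j = i then c else 1 : ℝ)):ℂ) • N j = 1 + ((c:ℂ) - 1) • N i := by
      intro i c
      have e : ∀ j : Fin d, (((if j = i then c else 1 : ℝ)):ℂ) • N j
          = N j + (if j = i then ((c:ℂ) - 1) • N i else 0) := by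
        intro j
        by_cases hj : j = i
        · subst hj; simp [sub_smul]
        · simp [hj]
      rw [Finset.sum_congr rfl fun j _ => e j, Finset.sum_add_distrib, hSum,
        Finset.sum_ite_eq' Finset.univ i, if_pos (Finset.mem_univ i)]
    have hone : ∀ i, (1 - N i).PosSemidef := by
      intro i
      have h2 := (hmem (fun j => if j = i then 0 else 1)).mpr
        (fun j => by split <;> norm_num)
      have h3 : ∑ j, (((if j = i then (0:ℝ) else 1 : ℝ)):ℂ) • N j = 1 + ((0:ℂ) - 1) • N i :=
        by exact_mod_cast hkey i 0
      rw [h3] at h2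
      simpa [sub_eq_add_neg] using h2
    have hcon : ∀ (i : Fin d) (μ : ℝ), 0 < μ → ¬ (1 + ((-μ:ℂ) - 1) • N i).PosSemidef := by
      intro i μ hμ hps
      have h2 : ∀ j, 0 ≤ (if j = i then -μ else 1 : ℝ) := by
        apply (hmem (fun j => if j = i then -μ else 1)).mp
        have h4 : ∑ j, (((if j = i then (-μ:ℝ) else 1 : ℝ)):ℂ) • N j = 1 + (((-μ:ℝ):ℂ) - 1) • N i :=
          hkey i (-μ)
        have h5 : (((-μ:ℝ)):ℂ) = (-μ:ℂ) := by push_cast; ring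
        rw [h5] at h4
        rw [show (∑ j, ((((fun j => if j = i then -μ else 1) j : ℝ)):ℂ) • N j)
            = ∑ j, (((if j = i then (-μ:ℝ) else 1 : ℝ)):ℂ) • N j from rfl, h4]
        exact hps
      have := h2 i
      rw [if_pos rfl] at this
      linarith
    have hex : ∀ i, ∃ v : (Fin d ⊕ Fin m) → ℂ, N i *ᵥ v = v ∧ star v ⬝ᵥ v = 1 := by
      intro i
      have : Nonempty (Fin d ⊕ Fin m) := ⟨Sum.inl i⟩
      exact Stmt1Aux.exists_unit_eigvec (hone i) (fun μ hμ => hcon i μ hμ)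
    choose v hv1 hv2 using hex
    have horth0 : ∀ i j, j ≠ i → N j *ᵥ v i = 0 := by
      intro i j hj
      have hterms : ∀ l, 0 ≤ star (v i) ⬝ᵥ (N l *ᵥ v i) := fun l => (hpsd l).dotProduct_mulVec_nonneg _
      have hsumt : ∑ l, star (v i) ⬝ᵥ (N l *ᵥ v i) = 1 := by
        rw [Stmt1Aux.sum_quad, hSum, Matrix.one_mulVec, hv2]
      have h1 : star (v i) ⬝ᵥ (N i *ᵥ v i) = 1 := by rw [hv1]; exact hv2 i
      have h2 : ∑ l ∈ Finset.univ.erase i, star (v i) ⬝ᵥ (N l *ᵥ v i) = 0 := by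
        have h3 := Finset.add_sum_erase Finset.univ
          (fun l => star (v i) ⬝ᵥ (N l *ᵥ v i)) (Finset.mem_univ i)
        rw [h1, hsumt] at h3
        exact add_eq_left.mp h3
      have h4 := (Finset.sum_eq_zero_iff_of_nonneg (fun l _ => hterms l)).mp h2 j
        (Finset.mem_erase.mpr ⟨hj, Finset.mem_univ j⟩)
      exact ((hpsd j).dotProduct_mulVec_zero_iff (v i)).mp h4
    have horthin : ∀ i j, j ≠ i → star (v j) ⬝ᵥ v i = 0 := by
      intro i j hj
      calc star (v j) ⬝ᵥ v i = star (N j *ᵥ v j) ⬝ᵥ v i := by rw [hv1]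
        _ = star (v j) ⬝ᵥ ((N j)ᴴ *ᵥ v i) := by
            rw [star_mulVec, ← dotProduct_mulVec]
        _ = star (v j) ⬝ᵥ (N j *ᵥ v i) := by rw [(hHerm j).eq]
        _ = 0 := by rw [horth0 i j hj, dotProduct_zero]
    -- build orthonormal basis
    let w : (Fin d ⊕ Fin m) → EuclideanSpace ℂ (Fin d ⊕ Fin m) :=
      Sum.elim (fun i => WithLp.toLp 2 (v i)) 0
    have horthw : Orthonormal ℂ ((Set.range (Sum.inl : Fin d → Fin d ⊕ Fin m)).restrict w) := by
      rw [orthonormal_iff_ite]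
      rintro ⟨_, a, rfl⟩ ⟨_, b, rfl⟩
      have hinner : (inner ℂ (w (Sum.inl a)) (w (Sum.inl b)) : ℂ) = star (v a) ⬝ᵥ v b :=
        Stmt1Aux.inner_eq_dot _ _
      by_cases hab : a = b
      · subst hab
        change inner ℂ (w (Sum.inl a)) (w (Sum.inl a)) = _
        rw [hinner, hv2]
        simp
      · change inner ℂ (w (Sum.inl a)) (w (Sum.inl b)) = _
        rw [hinner]
        rw [horthin b a hab, if_neg (fun hh => hab (Sum.inl_injective (congrArg Subtype.val hh)))]
    obtain ⟨b, hb⟩ := horthw.exists_orthonormalBasis_extension_of_card_eq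
      (by simp [finrank_euclideanSpace])
    have hbv : ∀ j : Fin d, ⇑(b (Sum.inl j)) = v j := by
      intro j
      rw [hb (Sum.inl j) ⟨j, rfl⟩]
      rfl
    set U : Matrix (Fin d ⊕ Fin m) (Fin d ⊕ Fin m) ℂ :=
      (EuclideanSpace.basisFun (Fin d ⊕ Fin m) ℂ).toBasis.toMatrix b.toBasis with hUdef
    have hUmem : U ∈ Matrix.unitaryGroup (Fin d ⊕ Fin m) ℂ :=
      (EuclideanSpace.basisFun (Fin d ⊕ Fin m) ℂ).toMatrix_orthonormalBasis_mem_unitary b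
    have hUapp : ∀ p q, U p q = b q p := fun _ _ => rfl
    have hentry : ∀ (M : Matrix (Fin d ⊕ Fin m) (Fin d ⊕ Fin m) ℂ) j k,
        (star U * M * U) j k = star (⇑(b j)) ⬝ᵥ (M *ᵥ ⇑(b k)) := by
      intro M j k
      simp only [Matrix.mul_apply, Matrix.mulVec, dotProduct, Matrix.star_apply,
        Pi.star_apply, hUapp, Finset.sum_mul, Finset.mul_sum]
      rw [Finset.sum_comm]
      refine Finset.sum_congr rfl fun p _ => Finset.sum_congr rfl fun q _ => ?_
      show star (b j p) * M p q * b k q = star (b j p) * (M p q * b k q)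
      ring
    have hinner0 : ∀ (x y : Fin d ⊕ Fin m), x ≠ y → star (⇑(b x)) ⬝ᵥ ⇑(b y) = 0 := by
      intro x y hxy
      rw [← Stmt1Aux.inner_eq_dot]
      have := orthonormal_iff_ite.mp b.orthonormal x y
      rwa [if_neg hxy] at this
    refine ⟨U, hUmem, fun i => (star U * N i * U).submatrix Sum.inr Sum.inr, fun i => ?_, fun i => ?_⟩
    · exact ((hpsd i).conjTranspose_mul_mul_same U).submatrix Sum.inr
    · ext p q
      rcases p with p | p <;> rcases q with q | q
      · rw [hentry, hbv, hbv]
        rw [Matrix.fromBlocks_apply₁₁]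
        by_cases hq : q = i
        · subst hq
          rw [hv1]
          by_cases hp : p = q
          · subst hp
            rw [hv2, Matrix.single_apply_same]
          · rw [horthin q p hp]
            rw [Matrix.single, Matrix.of_apply, if_neg (by tauto)]
        · rw [horth0 q i (fun hh => hq hh.symm), dotProduct_zero,
            Matrix.single, Matrix.of_apply, if_neg (by tauto)]
      · rw [hentry, hbv, Matrix.fromBlocks_apply₁₂]
        have htr : star (v p) ⬝ᵥ (N i *ᵥ ⇑(b (Sum.inr q)))
            = star (N i *ᵥ v p) ⬝ᵥ ⇑(b (Sum.inr q)) := by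
          rw [star_mulVec, ← dotProduct_mulVec, (hHerm i).eq]
        rw [htr]
        by_cases hp : p = i
        · subst hp
          rw [hv1, ← hbv p]
          rw [hinner0 (Sum.inl p) (Sum.inr q) (by simp)]
          rfl
        · rw [horth0 p i (fun hh => hp hh.symm)]
          simp
      · rw [hentry, hbv, Matrix.fromBlocks_apply₂₁]
        by_cases hq : q = i
        · subst hq
          rw [hv1, ← hbv q]
          rw [hinner0 (Sum.inr p) (Sum.inl q) (by simp)]
          rfl
        · rw [horth0 q i (fun hh => hq hh.symm), dotProduct_zero]
          rfl
      · rfl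
  · rintro ⟨U, hU, Nt, hNt, hblk⟩
    have hU1 : U * star U = 1 := Matrix.mem_unitaryGroup_iff.mp hU
    have hNi : ∀ i, N i = U * Matrix.fromBlocks (Matrix.single i i 1) 0 0 (Nt i) * star U := by
      intro i
      rw [← hblk i]
      calc N i = (U * star U) * N i * (U * star U) := by rw [hU1, Matrix.one_mul, Matrix.mul_one]
        _ = U * (star U * N i * U) * star U := by
            simp only [Matrix.mul_assoc]
    ext a
    simp only [Set.mem_setOf_eq]
    constructor
    · intro hA i
      have hps : (star U * (∑ j, (a j : ℂ) • N j) * U).PosSemidef := by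
        have := hA.conjTranspose_mul_mul_same U
        simpa [Matrix.star_eq_conjTranspose] using this
      have hform : star U * (∑ j, (a j : ℂ) • N j) * U
          = ∑ j, (a j : ℂ) • Matrix.fromBlocks (Matrix.single j j 1) 0 0 (Nt j) := by
        rw [Matrix.mul_sum, Matrix.sum_mul]
        refine Finset.sum_congr rfl fun j _ => ?_
        rw [Matrix.mul_smul, Matrix.smul_mul, hblk j]
      rw [hform] at hps
      have h0 := hps.dotProduct_mulVec_nonneg (Pi.single (Sum.inl i) 1)
      rw [Stmt1Aux.single_quad] at h0
      have hdiag : (∑ j, (a j : ℂ) • Matrix.fromBlocks (Matrix.single j j 1) 0 0 (Nt j))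
          (Sum.inl i) (Sum.inl i) = (a i : ℂ) := by
        rw [Matrix.sum_apply]
        rw [Finset.sum_eq_single i]
        · simp
        · intro c _ hc
          simp [Matrix.fromBlocks_apply₁₁, Matrix.single, hc]
        · simp
      rw [hdiag] at h0
      exact Complex.zero_le_real.mp h0
    · intro ha
      have hform : ∑ j, (a j : ℂ) • N j
          = U * (Matrix.fromBlocks (Matrix.diagonal fun j => (a j : ℂ)) 0 0
              (∑ j, (a j : ℂ) • Nt j)) * star U := by
        have e1 : ∀ j, (a j : ℂ) • N j
            = U * ((a j : ℂ) • Matrix.fromBlocks (Matrix.single j j 1) 0 0 (Nt j)) * star U := by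
          intro j
          rw [hNi j, Matrix.mul_smul, Matrix.smul_mul]
        rw [Finset.sum_congr rfl fun j _ => e1 j, ← Matrix.sum_mul, ← Matrix.mul_sum]
        congr 2
        ext p q
        rcases p with p | p <;> rcases q with q | q
        · simp only [Matrix.sum_apply, Matrix.smul_apply, Matrix.fromBlocks_apply₁₁,
            Matrix.single, Matrix.of_apply, smul_eq_mul, mul_ite, mul_one, mul_zero]
          by_cases hpq : p = q
          · subst hpq
            rw [Matrix.diagonal_apply_eq]
            rw [Finset.sum_eq_single p]
            · rw [if_pos ⟨rfl, rfl⟩]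
            · intro c _ hc; rw [if_neg (by tauto)]
            · simp
          · rw [Matrix.diagonal_apply_ne _ hpq]
            exact Finset.sum_eq_zero fun c _ => by
              rw [if_neg fun hcc => hpq (hcc.1.symm.trans hcc.2)]
        · simp [Matrix.sum_apply]
        · simp [Matrix.sum_apply]
        · simp [Matrix.sum_apply]
      rw [hform]
      have hblkpsd : (Matrix.fromBlocks (Matrix.diagonal fun j => (a j : ℂ)) 0 0
          (∑ j, (a j : ℂ) • Nt j)).PosSemidef := by
        apply Stmt1Aux.psd_fromBlocks
        · exact Matrix.posSemidef_diagonal_iff.mpr fun j => Complex.zero_le_real.mpr (ha j)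
        · exact Stmt1Aux.psd_sum _ _ fun j _ => Stmt1Aux.psd_real_smul (hNt j) (ha j)
      have := hblkpsd.mul_mul_conjTranspose_same U
      simpa [Matrix.star_eq_conjTranspose] using this
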